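/- Let (M, ⊕, e) be a monoid, let a : ℕ → M, and let k ≥ 1 be a natural number. For every natural number x with k ∤ x, define the suffix-within-block value s(x) = a[x : k·(⌊x/k⌋ + 1)] and the prefix-within-block value p(x + k − 1) = a[k·⌊(x + k − 1)/k⌋ : x + k]. Then s(x) ⊕ p(x + k − 1) = a[x : x + k]; that is, the suffix of the length-k aligned block containing x combined with the prefix of the length-k aligned block containing x + k − 1 equals the reduction of the length-k window starting at x. -/

import Mathlib

/-- Ordered reduction `a[l : r] = a l ⊕ a (l+1) ⊕ ⋯ ⊕ a (r-1)` over the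
half-open interval `[l, r)`, equal to the identity when `r ≤ l`. -/
def orderedReduce {M : Type*} [Monoid M] (a : ℕ → M) (l r : ℕ) : M :=
  ((List.range' l (r - l)).map a).prod

lemma orderedReduce_append {M : Type*} [Monoid M] (a : ℕ → M) {l m r : ℕ}
    (h1 : l ≤ m) (h2 : m ≤ r) :
    orderedReduce a l m * orderedReduce a m r = orderedReduce a l r := by
  unfold orderedReduce
  rw [← List.prod_append, ← List.map_append]
  have : List.range' l (m - l) ++ List.range' m (r - m) = List.range' l (r - l) := by
    have := @List.range'_append l (m - l) (r - m) 1
    simp only [one_mul] at this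
    rw [show l + (m - l) = m by omega] at this
    rw [this]
    congr 1
    omega
  rw [this]

/-- For `k ≥ 1` and `k ∤ x`, the within-block suffix at `x` combined with the
within-block prefix at `x + k - 1` equals the reduction of the length-`k`
window starting at `x`. -/
theorem bdbs_suffix_prefix_combine {M : Type*} [Monoid M] (a : ℕ → M)
    (k x : ℕ) (hk : 1 ≤ k) (hx : ¬ k ∣ x) :
    orderedReduce a x (k * (x / k + 1)) *
      orderedReduce a (k * ((x + k - 1) / k)) (x + k) =
    orderedReduce a x (x + k) := by
  have hmod : x % k ≠ 0 := fun h => hx (Nat.dvd_of_mod_eq_zero h)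
  have hdm := Nat.div_add_mod x k
  have hlt : x % k < k := Nat.mod_lt _ hk
  have hdiv : (x + k - 1) / k = x / k + 1 := by
    apply Nat.div_eq_of_lt_le <;>
      simp only [add_mul, one_mul] <;> rw [mul_comm (x/k) k] <;> omega
  rw [hdiv, mul_add, mul_one]
  exact orderedReduce_append a (by omega) (by omega)
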